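/- Let 𝒜 be a Hom-finite Krull-Schmidt triangulated k-category. If every indecomposable object X of 𝒜 is a d_X-th Calabi-Yau object for some integer d_X, then 𝒜 has a Serre functor F satisfying F(X) ≅ X[d_X] for every indecomposable X. -/

import Mathlib

open CategoryTheory CategoryTheory.Limits CategoryTheory.Pretriangulated

universe v u

namespace CYPaper

variable (k : Type u) [Field k]
variable (C : Type u) [Category.{v} C] [Preadditive C] [Linear k C]
  [HasZeroObject C] [HasShift C ℤ] [∀ n : ℤ, (shiftFunctor C n).Additive]
  [Pretriangulated C]

/-- `X` is a `d`-th Calabi-Yau object: there is an isomorphism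
`Hom(X,-) ≅ D Hom(-, X⟦d⟧)`, natural in the variable. -/
def IsCYObj (d : ℤ) (X : C) : Prop :=
  ¬ IsZero X ∧
    ∃ η : ∀ Z : C, (X ⟶ Z) ≃ₗ[k] Module.Dual k (Z ⟶ X⟦d⟧),
      ∀ {Z W : C} (f : Z ⟶ W) (u : X ⟶ Z) (w : W ⟶ X⟦d⟧),
        η W (u ≫ f) w = η Z u (f ≫ w)

variable {C}

/-- A biproduct decomposition `X ≅ A ⊕ B`, expressed without assuming
the existence of biproducts. -/
def IsDecomp (X A B : C) : Prop :=
  ∃ (iA : A ⟶ X) (iB : B ⟶ X) (pA : X ⟶ A) (pB : X ⟶ B),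
    iA ≫ pA = 𝟙 A ∧ iB ≫ pB = 𝟙 B ∧ iA ≫ pB = 0 ∧ iB ≫ pA = 0 ∧
      pA ≫ iA + pB ≫ iB = 𝟙 X

/-- A direct sum decomposition `X ≅ X₁ ⊕ ⋯ ⊕ X_r`. -/
def IsDirectSumDecomp (X : C) {r : ℕ} (Xs : Fin r → C) : Prop :=
  ∃ (ι : ∀ j, Xs j ⟶ X) (π : ∀ j, X ⟶ Xs j),
    (∀ j, ι j ≫ π j = 𝟙 (Xs j)) ∧ (∀ j j', j ≠ j' → ι j ≫ π j' = 0) ∧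
      (∑ j, π j ≫ ι j) = 𝟙 X

/-- An object is indecomposable if it is non-zero and admits no non-trivial
direct sum decomposition. -/
def Indec (X : C) : Prop :=
  ¬ IsZero X ∧ ∀ A B : C, IsDecomp X A B → IsZero A ∨ IsZero B

variable (C) in
/-- The category is Krull-Schmidt: Hom-finite and any indecomposable object has
local endomorphism ring. -/
def KrullSchmidt : Prop :=
  ∀ X : C, Indec X → IsLocalRing (End X)

/-- Auslander-Reiten triangle. -/
def IsARTriangle (T : Triangle C) : Prop :=
  (T ∈ distTriang C) ∧ Indec T.obj₁ ∧ Indec T.obj₃ ∧ T.mor₃ ≠ 0 ∧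
    ∀ (Z' : C) (t : Z' ⟶ T.obj₃),
      (¬ ∃ s : T.obj₃ ⟶ Z', s ≫ t = 𝟙 T.obj₃) → ∃ t' : Z' ⟶ T.obj₂, t = t' ≫ T.mor₂

variable (C) in
/-- A right Serre functor on a Hom-finite `k`-linear category. -/
structure RightSerre where
  F : C ⥤ C
  additive : F.Additive
  linear : F.Linear k
  η : ∀ A B : C, (A ⟶ B) ≃ₗ[k] Module.Dual k (B ⟶ F.obj A)
  nat_right : ∀ {A B B' : C} (g : B ⟶ B') (u : A ⟶ B) (w : B' ⟶ F.obj A),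
    η A B' (u ≫ g) w = η A B u (g ≫ w)
  nat_left : ∀ {A A' B : C} (f : A' ⟶ A) (u : A ⟶ B) (w : B ⟶ F.obj A'),
    η A' B (f ≫ u) w = η A B u (w ≫ F.map f)

variable (C) in
/-- A Serre functor: a right Serre functor which is an equivalence. -/
structure Serre extends RightSerre k C where
  isEquiv : F.IsEquivalence

/-- A minimal `d`-th Calabi-Yau object: a `d`-th CY object no proper direct
summand of which is a `d`-th CY object. -/
def IsMinCYObj (d : ℤ) (X : C) : Prop :=
  IsCYObj k C d X ∧
    ∀ A B : C, IsDecomp X A B → ¬ IsZero B → ¬ IsCYObj k C d A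

end CYPaper

open CategoryTheory CategoryTheory.Limits CategoryTheory.Pretriangulated CYPaper

namespace CYProof

open CategoryTheory CategoryTheory.Limits CategoryTheory.Pretriangulated CYPaper

set_option linter.unusedSectionVars false

variable {k : Type u} [Field k]
variable {C : Type u} [Category.{v} C] [Preadditive C] [Linear k C]
  [HasZeroObject C] [HasShift C ℤ] [∀ n : ℤ, (shiftFunctor C n).Additive]
  [Pretriangulated C]

section Basic

lemma isZero_shift_of {X : C} (n : ℤ) (h : IsZero X) : IsZero (X⟦n⟧) := by
  rw [IsZero.iff_id_eq_zero] at h ⊢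
  calc 𝟙 (X⟦n⟧) = (shiftFunctor C n).map (𝟙 X) := ((shiftFunctor C n).map_id X).symm
    _ = 0 := by rw [h, Functor.map_zero]

lemma isZero_of_shift {X : C} (n : ℤ) (h : IsZero (X⟦n⟧)) : IsZero X :=
  (isZero_shift_of (-n) h).of_iso
    ((shiftFunctorCompIsoId C n (-n) (add_neg_cancel n)).app X).symm

lemma isDecomp_map {X A B : C} (h : IsDecomp X A B) (F : C ⥤ C) [F.Additive] :
    IsDecomp (F.obj X) (F.obj A) (F.obj B) := by
  obtain ⟨iA, iB, pA, pB, h1, h2, h3, h4, h5⟩ := h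
  refine ⟨F.map iA, F.map iB, F.map pA, F.map pB, ?_, ?_, ?_, ?_, ?_⟩
  · rw [← F.map_comp, h1, F.map_id]
  · rw [← F.map_comp, h2, F.map_id]
  · rw [← F.map_comp, h3, F.map_zero]
  · rw [← F.map_comp, h4, F.map_zero]
  · rw [← F.map_comp, ← F.map_comp, ← F.map_add, h5, F.map_id]

lemma isDecomp_of_iso {X A B X' A' B' : C} (h : IsDecomp X A B)
    (eX : X ≅ X') (eA : A ≅ A') (eB : B ≅ B') : IsDecomp X' A' B' := by
  obtain ⟨iA, iB, pA, pB, h1, h2, h3, h4, h5⟩ := h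
  refine ⟨eA.inv ≫ iA ≫ eX.hom, eB.inv ≫ iB ≫ eX.hom,
    eX.inv ≫ pA ≫ eA.hom, eX.inv ≫ pB ≫ eB.hom, ?_, ?_, ?_, ?_, ?_⟩
  · simp only [Category.assoc, Iso.hom_inv_id_assoc]
    rw [reassoc_of% h1]; simp
  · simp only [Category.assoc, Iso.hom_inv_id_assoc]
    rw [reassoc_of% h2]; simp
  · simp only [Category.assoc, Iso.hom_inv_id_assoc]
    rw [reassoc_of% h3]; simp
  · simp only [Category.assoc, Iso.hom_inv_id_assoc]
    rw [reassoc_of% h4]; simp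
  · have : eX.inv ≫ (pA ≫ iA + pB ≫ iB) ≫ eX.hom = 𝟙 X' := by rw [h5]; simp
    rw [← this]
    simp only [Preadditive.comp_add, Preadditive.add_comp, Category.assoc,
      Iso.hom_inv_id_assoc]

lemma indec_shift {X : C} (h : Indec X) (n : ℤ) : Indec (X⟦n⟧) := by
  refine ⟨fun hz => h.1 (isZero_of_shift n hz), fun A B hAB => ?_⟩
  have hAB' : IsDecomp X (A⟦(-n)⟧) (B⟦(-n)⟧) :=
    isDecomp_of_iso (isDecomp_map hAB (shiftFunctor C (-n)))
      ((shiftFunctorCompIsoId C n (-n) (add_neg_cancel n)).app X) (Iso.refl _) (Iso.refl _)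
  rcases h.2 _ _ hAB' with hz | hz
  · exact Or.inl ((isZero_shift_of n hz).of_iso
      ((shiftFunctorCompIsoId C (-n) n (neg_add_cancel n)).app A).symm)
  · exact Or.inr ((isZero_shift_of n hz).of_iso
      ((shiftFunctorCompIsoId C (-n) n (neg_add_cancel n)).app B).symm)

lemma isDecomp_unique_up_to_iso {X A B X' A' B' : C} (h : IsDecomp X A B)
    (h' : IsDecomp X' A' B') (eA : A ≅ A') (eB : B ≅ B') : Nonempty (X ≅ X') := by
  obtain ⟨iA, iB, pA, pB, h1, h2, h3, h4, h5⟩ := h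
  obtain ⟨iA', iB', pA', pB', h1', h2', h3', h4', h5'⟩ := h'
  refine ⟨⟨pA ≫ eA.hom ≫ iA' + pB ≫ eB.hom ≫ iB',
    pA' ≫ eA.inv ≫ iA + pB' ≫ eB.inv ≫ iB, ?_, ?_⟩⟩
  · simp only [Preadditive.comp_add, Preadditive.add_comp, Category.assoc]
    rw [reassoc_of% h1', reassoc_of% h2', reassoc_of% h3', reassoc_of% h4']
    simp only [zero_comp, comp_zero, add_zero, zero_add, Iso.hom_inv_id_assoc]
    rw [← h5]
  · simp only [Preadditive.comp_add, Preadditive.add_comp, Category.assoc]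
    rw [reassoc_of% h1, reassoc_of% h2, reassoc_of% h3, reassoc_of% h4]
    simp only [zero_comp, comp_zero, add_zero, zero_add, Iso.inv_hom_id_assoc]
    rw [← h5']

/-- Splitting of a distinguished triangle whose third map vanishes. -/
lemma isDecomp_of_distTriang (T : Triangle C) (hT : T ∈ distTriang C)
    (h3 : T.mor₃ = 0) : IsDecomp T.obj₂ T.obj₁ T.obj₃ := by
  have hsec : ∃ iB : T.obj₃ ⟶ T.obj₂, iB ≫ T.mor₂ = 𝟙 T.obj₃ := by
    obtain ⟨g, hg⟩ := Triangle.coyoneda_exact₂ T.rotate (rot_of_distTriang _ hT)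
      (𝟙 T.obj₃) (by show 𝟙 T.obj₃ ≫ T.mor₃ = 0; rw [h3, comp_zero])
    exact ⟨g, hg.symm⟩
  have hretr : ∃ pA' : T.obj₂ ⟶ T.obj₁, T.mor₁ ≫ pA' = 𝟙 T.obj₁ := by
    obtain ⟨g, hg⟩ := Triangle.yoneda_exact₂ T.invRotate (inv_rot_of_distTriang _ hT)
      (𝟙 T.obj₁) (by show (-T.mor₃⟦(-1 : ℤ)⟧' ≫ (shiftEquiv C (1 : ℤ)).unitIso.inv.app _) ≫ 𝟙 T.obj₁ = 0; rw [h3]; simp)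
    exact ⟨g, hg.symm⟩
  obtain ⟨iB, h2⟩ := hsec
  obtain ⟨pA', h1⟩ := hretr
  have h12 : T.mor₁ ≫ T.mor₂ = 0 := comp_distTriang_mor_zero₁₂ T hT
  have he2 : (𝟙 T.obj₂ - T.mor₂ ≫ iB) ≫ T.mor₂ = 0 := by
    simp only [Preadditive.sub_comp, Category.id_comp, Category.assoc, h2,
      Category.comp_id, sub_self]
  obtain ⟨pA, hpA⟩ := Triangle.coyoneda_exact₂ T hT _ he2
  have hmain : pA ≫ T.mor₁ = 𝟙 T.obj₂ - T.mor₂ ≫ iB := hpA.symm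
  have hiApA : T.mor₁ ≫ pA = 𝟙 T.obj₁ := by
    have step : (T.mor₁ ≫ pA) ≫ T.mor₁ = T.mor₁ := by
      rw [Category.assoc, hmain]
      simp only [Preadditive.comp_sub, Category.comp_id]
      rw [reassoc_of% h12]; simp
    calc T.mor₁ ≫ pA = ((T.mor₁ ≫ pA) ≫ T.mor₁) ≫ pA' := by
          rw [Category.assoc, h1, Category.comp_id]
      _ = T.mor₁ ≫ pA' := by rw [step]
      _ = 𝟙 _ := h1
  have hiBpA : iB ≫ pA = 0 := by
    have step : (iB ≫ pA) ≫ T.mor₁ = 0 := by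
      rw [Category.assoc, hmain]
      simp only [Preadditive.comp_sub, Category.comp_id]
      rw [reassoc_of% h2]; simp
    calc iB ≫ pA = ((iB ≫ pA) ≫ T.mor₁) ≫ pA' := by
          rw [Category.assoc, h1, Category.comp_id]
      _ = 0 := by rw [step]; simp
  exact ⟨T.mor₁, iB, pA, T.mor₂, hiApA, h2, h12, hiBpA, by rw [hmain]; abel⟩

/-- Any two objects admit a "biproduct" object. -/
lemma exists_decomp (A B : C) : ∃ P : C, IsDecomp P A B := by
  obtain ⟨Z, g, h, hT⟩ := Pretriangulated.distinguished_cocone_triangle (0 : B⟦(-1:ℤ)⟧ ⟶ A)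
  have hrot := rot_of_distTriang _ hT
  have h3 : (Triangle.mk (0 : B⟦(-1:ℤ)⟧ ⟶ A) g h).rotate.mor₃ = 0 := by
    show -((0 : B⟦(-1:ℤ)⟧ ⟶ A)⟦(1:ℤ)⟧') = 0; simp
  have hd := isDecomp_of_distTriang _ hrot h3
  exact ⟨Z, isDecomp_of_iso hd (Iso.refl _) (Iso.refl _)
    ((shiftFunctorCompIsoId C (-1 : ℤ) (1 : ℤ) (neg_add_cancel 1)).app B)⟩

end Basic

section SDual

variable [∀ X Y : C, FiniteDimensional k (X ⟶ Y)]

variable (k) in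
/-- The data of a (right) Serre dual of `X` : an object `obj` together with
a family of isomorphisms `Hom(Z, obj) ≅ D Hom(X, Z)` natural in `Z`. -/
structure SDualData (X : C) where
  obj : C
  ε : ∀ Z : C, (Z ⟶ obj) ≃ₗ[k] Module.Dual k (X ⟶ Z)
  nat : ∀ ⦃Z W : C⦄ (f : Z ⟶ W) (u : W ⟶ obj) (v : X ⟶ Z),
    ε Z (f ≫ u) v = ε W u (v ≫ f)

/-- The Serre dual of a `d`-th Calabi-Yau object is `X⟦d⟧`. -/
noncomputable def SDualData.ofCY {X : C} {d : ℤ} (h : IsCYObj k C d X) :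
    SDualData k X where
  obj := X⟦d⟧
  ε Z := (Module.evalEquiv k (Z ⟶ X⟦d⟧)).trans (h.2.choose Z).dualMap
  nat := by
    intro Z W f u v
    simp only [LinearEquiv.trans_apply, LinearEquiv.dualMap_apply,
      Module.evalEquiv_apply, Module.Dual.eval_apply]
    exact (h.2.choose_spec f v u).symm

variable (k) in
lemma subsingleton_dual_of_subsingleton {M : Type*} [AddCommGroup M] [Module k M]
    (h : Subsingleton M) : Subsingleton (Module.Dual k M) :=
  ⟨fun φ ψ => LinearMap.ext fun m => by rw [Subsingleton.elim m 0, map_zero, map_zero]⟩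

/-- A zero object is its own Serre dual. -/
noncomputable def SDualData.ofZero {X : C} (h : IsZero X) : SDualData k X where
  obj := X
  ε Z :=
    haveI h1 : Subsingleton (Z ⟶ X) := ⟨h.eq_of_tgt⟩
    haveI h3 : Subsingleton (Module.Dual k (X ⟶ Z)) :=
      subsingleton_dual_of_subsingleton k (M := X ⟶ Z) ⟨h.eq_of_src⟩
    LinearEquiv.ofLinear 0 0 (LinearMap.ext fun φ => Subsingleton.elim _ _)
      (LinearMap.ext fun u => Subsingleton.elim _ _)
  nat := by
    intro Z W f u v
    have hv : v = 0 := h.eq_of_src _ _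
    simp only [hv, zero_comp, map_zero]

/-- Serre duals combine along direct sum decompositions. -/
lemma sdual_combine {X A B : C} (hX : IsDecomp X A B)
    (dA : SDualData k A) (dB : SDualData k B) : Nonempty (SDualData k X) := by
  obtain ⟨P, hP⟩ := exists_decomp dA.obj dB.obj
  obtain ⟨iA, iB, pA, pB, c1, c2, c3, c4, c5⟩ := hX
  obtain ⟨jA, jB, qA, qB, d1, d2, d3, d4, d5⟩ := hP
  refine ⟨{ obj := P, ε := fun Z => LinearEquiv.ofLinear ?_ ?_ ?_ ?_, nat := ?_ }⟩
  · -- forward map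
    exact
    { toFun := fun u => (dA.ε Z (u ≫ qA)).comp (Linear.leftComp k Z iA)
        + (dB.ε Z (u ≫ qB)).comp (Linear.leftComp k Z iB)
      map_add' := by
        intro u u'
        simp only [Preadditive.add_comp, map_add, LinearMap.add_comp]
        abel
      map_smul' := by
        intro c u
        simp only [Linear.smul_comp, map_smul, LinearMap.smul_comp, RingHom.id_apply,
          smul_add] }
  · -- backward map
    exact
    { toFun := fun φ => (dA.ε Z).symm (φ.comp (Linear.leftComp k Z pA)) ≫ jA
        + (dB.ε Z).symm (φ.comp (Linear.leftComp k Z pB)) ≫ jB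
      map_add' := by
        intro φ ψ
        simp only [LinearMap.add_comp, map_add, Preadditive.add_comp]
        abel
      map_smul' := by
        intro c φ
        simp only [LinearMap.smul_comp, map_smul, Linear.smul_comp, RingHom.id_apply,
          smul_add] }
  · -- forward ∘ backward = id
    apply LinearMap.ext; intro φ
    apply LinearMap.ext; intro v
    simp only [LinearMap.coe_comp, Function.comp_apply, LinearMap.coe_mk, AddHom.coe_mk,
      LinearMap.id_coe, id_eq, Preadditive.add_comp, Category.assoc]
    rw [d1, d2, d4, d3]
    simp only [Category.comp_id, comp_zero, zero_comp, add_zero, zero_add, map_zero,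
      LinearMap.zero_apply, LinearEquiv.apply_symm_apply]
    simp only [LinearMap.add_apply, LinearMap.coe_comp, Function.comp_apply,
      Linear.leftComp_apply]
    rw [← map_add φ]
    congr 1
    rw [← Category.assoc, ← Category.assoc, ← Preadditive.add_comp, c5, Category.id_comp]
  · -- backward ∘ forward = id
    apply LinearMap.ext; intro u
    simp only [LinearMap.coe_comp, Function.comp_apply, LinearMap.coe_mk, AddHom.coe_mk,
      LinearMap.id_coe, id_eq]
    have eA : ((dA.ε Z (u ≫ qA)).comp (Linear.leftComp k Z iA)
        + (dB.ε Z (u ≫ qB)).comp (Linear.leftComp k Z iB)).comp (Linear.leftComp k Z pA)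
        = dA.ε Z (u ≫ qA) := by
      apply LinearMap.ext; intro w
      simp only [LinearMap.add_apply, LinearMap.coe_comp, Function.comp_apply,
        Linear.leftComp_apply]
      rw [← Category.assoc, c1, ← Category.assoc, c4]
      simp
    have eB : ((dA.ε Z (u ≫ qA)).comp (Linear.leftComp k Z iA)
        + (dB.ε Z (u ≫ qB)).comp (Linear.leftComp k Z iB)).comp (Linear.leftComp k Z pB)
        = dB.ε Z (u ≫ qB) := by
      apply LinearMap.ext; intro w
      simp only [LinearMap.add_apply, LinearMap.coe_comp, Function.comp_apply,
        Linear.leftComp_apply]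
      rw [← Category.assoc, c3, ← Category.assoc, c2]
      simp
    rw [eA, eB, LinearEquiv.symm_apply_apply, LinearEquiv.symm_apply_apply]
    rw [Category.assoc, Category.assoc, ← Preadditive.comp_add, d5, Category.comp_id]
  · -- naturality
    intro Z W f u v
    simp only [LinearEquiv.ofLinear_apply, LinearMap.add_apply, LinearMap.coe_comp,
      Function.comp_apply, Linear.leftComp_apply, LinearMap.coe_mk, AddHom.coe_mk]
    rw [Category.assoc, Category.assoc]
    rw [dA.nat f (u ≫ qA) (iA ≫ v), dB.nat f (u ≫ qB) (iB ≫ v)]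
    rw [Category.assoc, Category.assoc]

/-- Serre duals are unique up to isomorphism. -/
lemma sdual_unique {X : C} (d₁ d₂ : SDualData k X) : Nonempty (d₁.obj ≅ d₂.obj) := by
  set a : d₁.obj ⟶ d₂.obj := (d₂.ε d₁.obj).symm (d₁.ε d₁.obj (𝟙 d₁.obj)) with ha
  set b : d₂.obj ⟶ d₁.obj := (d₁.ε d₂.obj).symm (d₂.ε d₂.obj (𝟙 d₂.obj)) with hb
  have key₁ : ∀ (Z : C) (u : Z ⟶ d₁.obj) (v : X ⟶ Z), d₂.ε Z (u ≫ a) v = d₁.ε Z u v := by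
    intro Z u v
    rw [d₂.nat u a v, ha, LinearEquiv.apply_symm_apply]
    have := d₁.nat u (𝟙 d₁.obj) v
    rw [Category.comp_id] at this
    rw [← this]
  have key₂ : ∀ (Z : C) (u : Z ⟶ d₂.obj) (v : X ⟶ Z), d₁.ε Z (u ≫ b) v = d₂.ε Z u v := by
    intro Z u v
    rw [d₁.nat u b v, hb, LinearEquiv.apply_symm_apply]
    have := d₂.nat u (𝟙 d₂.obj) v
    rw [Category.comp_id] at this
    rw [← this]
  refine ⟨⟨a, b, ?_, ?_⟩⟩
  · have : ∀ v, d₁.ε d₁.obj ((a ≫ b)) v = d₁.ε d₁.obj (𝟙 d₁.obj) v := by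
      intro v
      have h1 := key₂ d₁.obj a v
      have h2 := key₁ d₁.obj (𝟙 d₁.obj) v
      rw [Category.id_comp] at h2
      rw [h1, h2]
    have : d₁.ε d₁.obj (a ≫ b) = d₁.ε d₁.obj (𝟙 d₁.obj) := LinearMap.ext this
    exact (d₁.ε d₁.obj).injective this
  · have : ∀ v, d₂.ε d₂.obj ((b ≫ a)) v = d₂.ε d₂.obj (𝟙 d₂.obj) v := by
      intro v
      have h1 := key₁ d₂.obj b v
      have h2 := key₂ d₂.obj (𝟙 d₂.obj) v
      rw [Category.id_comp] at h2
      rw [h1, h2]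
    have : d₂.ε d₂.obj (b ≫ a) = d₂.ε d₂.obj (𝟙 d₂.obj) := LinearMap.ext this
    exact (d₂.ε d₂.obj).injective this

end SDual

section Induction

variable [∀ X Y : C, FiniteDimensional k (X ⟶ Y)]

lemma isDecomp_swap {X A B : C} (h : IsDecomp X A B) : IsDecomp X B A := by
  obtain ⟨iA, iB, pA, pB, h1, h2, h3, h4, h5⟩ := h
  exact ⟨iB, iA, pB, pA, h2, h1, h4, h3, by rw [← h5]; abel⟩

lemma finrank_lt_of_decomp {X A B : C} (h : IsDecomp X A B)
    (hB : ¬IsZero B) :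
    Module.finrank k (A ⟶ A) < Module.finrank k (X ⟶ X) := by
  obtain ⟨iA, iB, pA, pB, h1, h2, h3, h4, h5⟩ := h
  set L : ((A ⟶ A) × (B ⟶ B)) →ₗ[k] (X ⟶ X) :=
    { toFun := fun p => pA ≫ p.1 ≫ iA + pB ≫ p.2 ≫ iB
      map_add' := by
        intro p q
        simp only [Prod.fst_add, Prod.snd_add, Preadditive.add_comp, Preadditive.comp_add]
        abel
      map_smul' := by
        intro c p
        simp only [Prod.smul_fst, Prod.smul_snd, Linear.smul_comp, Linear.comp_smul,
          RingHom.id_apply, smul_add] } with hL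
  have hinj : Function.Injective L := by
    intro p q hpq
    have key : ∀ r : ((A ⟶ A) × (B ⟶ B)), (iA ≫ L r ≫ pA, iB ≫ L r ≫ pB) = r := by
      intro r
      have eA : iA ≫ L r ≫ pA = r.1 := by
        simp only [hL, LinearMap.coe_mk, AddHom.coe_mk, Preadditive.comp_add,
          Preadditive.add_comp, Category.assoc]
        rw [reassoc_of% h1, reassoc_of% h3]
        simp only [zero_comp, comp_zero, add_zero, zero_add]
        rw [h1, Category.comp_id]
      have eB : iB ≫ L r ≫ pB = r.2 := by
        simp only [hL, LinearMap.coe_mk, AddHom.coe_mk, Preadditive.comp_add,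
          Preadditive.add_comp, Category.assoc]
        rw [reassoc_of% h4, reassoc_of% h2]
        simp only [zero_comp, comp_zero, add_zero, zero_add]
        rw [h2, Category.comp_id]
      rw [eA, eB]
    calc p = (iA ≫ L p ≫ pA, iB ≫ L p ≫ pB) := (key p).symm
      _ = (iA ≫ L q ≫ pA, iB ≫ L q ≫ pB) := by rw [hpq]
      _ = q := key q
  have hle : Module.finrank k ((A ⟶ A) × (B ⟶ B)) ≤ Module.finrank k (X ⟶ X) :=
    LinearMap.finrank_le_finrank_of_injective hinj
  rw [Module.finrank_prod] at hle
  have hposB : 0 < Module.finrank k (B ⟶ B) := by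
    rw [Module.finrank_pos_iff]
    exact ⟨⟨𝟙 B, 0, fun e => hB (by rw [IsZero.iff_id_eq_zero]; exact e)⟩⟩
  omega

include k in
/-- Induction on direct sum decompositions. -/
theorem decomp_induction (P : C → Prop) (h0 : ∀ X : C, IsZero X → P X)
    (h1 : ∀ X : C, Indec X → P X)
    (h2 : ∀ X A B : C, IsDecomp X A B → ¬IsZero A → ¬IsZero B → P A → P B → P X) :
    ∀ X : C, P X := by
  suffices H : ∀ (n : ℕ) (X : C), Module.finrank k (X ⟶ X) ≤ n → P X from
    fun X => H _ X le_rfl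
  intro n
  induction n with
  | zero =>
    intro X hX
    apply h0
    rw [IsZero.iff_id_eq_zero]
    have : Subsingleton (X ⟶ X) := by
      rw [← Module.finrank_zero_iff (R := k)]
      omega
    exact Subsingleton.elim _ _
  | succ n ih =>
    intro X hX
    by_cases hz : IsZero X
    · exact h0 X hz
    by_cases hi : Indec X
    · exact h1 X hi
    rw [Indec] at hi
    push_neg at hi
    obtain ⟨A, B, hd, hA, hB⟩ := hi hz
    have rA : Module.finrank k (A ⟶ A) < Module.finrank k (X ⟶ X) :=
      finrank_lt_of_decomp hd hB
    have rB : Module.finrank k (B ⟶ B) < Module.finrank k (X ⟶ X) :=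
      finrank_lt_of_decomp (isDecomp_swap hd) hA
    exact h2 X A B hd hA hB (ih A (by omega)) (ih B (by omega))

/-- Every object admits a Serre dual. -/
theorem exists_sdual (hCY : ∀ X : C, Indec X → ∃ d : ℤ, IsCYObj k C d X) :
    ∀ X : C, Nonempty (SDualData k X) := by
  apply decomp_induction (k := k)
  · exact fun X h => ⟨SDualData.ofZero h⟩
  · intro X h
    obtain ⟨d, hd⟩ := hCY X h
    exact ⟨SDualData.ofCY hd⟩
  · intro X A B hd _ _ ⟨dA⟩ ⟨dB⟩
    exact sdual_combine hd dA dB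

end Induction

section SerreFunctor

variable [∀ X Y : C, FiniteDimensional k (X ⟶ Y)]
variable (sd : ∀ X : C, SDualData k X)

/-- The dual functional attached to a morphism. -/
noncomputable def dualf {X Y : C} (f : X ⟶ Y) : Module.Dual k (Y ⟶ (sd X).obj) :=
  ((sd X).ε (sd X).obj (𝟙 _)).comp (Linear.leftComp k _ f)

lemma dualf_apply {X Y : C} (f : X ⟶ Y) (w : Y ⟶ (sd X).obj) :
    dualf sd f w = (sd X).ε (sd X).obj (𝟙 _) (f ≫ w) := rfl

/-- The action of the Serre functor on morphisms. -/
noncomputable def smap {X Y : C} (f : X ⟶ Y) : (sd X).obj ⟶ (sd Y).obj :=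
  ((sd Y).ε ((sd X).obj)).symm (dualf sd f)

lemma smap_star {X Y Z : C} (f : X ⟶ Y) (u : Z ⟶ (sd X).obj) (v : Y ⟶ Z) :
    (sd Y).ε Z (u ≫ smap sd f) v = (sd X).ε Z u (f ≫ v) := by
  rw [(sd Y).nat u (smap sd f) v, smap, LinearEquiv.apply_symm_apply, dualf_apply]
  have h2 := (sd X).nat u (𝟙 (sd X).obj) (f ≫ v)
  rw [Category.comp_id] at h2
  rw [h2, Category.assoc]

lemma smap_id (X : C) : smap sd (𝟙 X) = 𝟙 ((sd X).obj) := by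
  apply ((sd X).ε ((sd X).obj)).injective
  apply LinearMap.ext; intro v
  have h := smap_star sd (𝟙 X) (𝟙 ((sd X).obj)) v
  rw [Category.id_comp, Category.id_comp] at h
  exact h

lemma smap_comp {X Y Z : C} (f : X ⟶ Y) (g : Y ⟶ Z) :
    smap sd (f ≫ g) = smap sd f ≫ smap sd g := by
  apply ((sd Z).ε ((sd X).obj)).injective
  apply LinearMap.ext; intro v
  have h1 := smap_star sd (f ≫ g) (𝟙 ((sd X).obj)) v
  rw [Category.id_comp] at h1
  have h2 := smap_star sd g (smap sd f) v
  have h3 := smap_star sd f (𝟙 ((sd X).obj)) (g ≫ v)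
  rw [Category.id_comp] at h3
  rw [h1, h2, h3, Category.assoc]

lemma smap_add {X Y : C} (f g : X ⟶ Y) :
    smap sd (f + g) = smap sd f + smap sd g := by
  rw [smap, smap, smap, ← map_add]
  congr 1
  apply LinearMap.ext; intro w
  simp only [dualf_apply, LinearMap.add_apply, Preadditive.add_comp, map_add]

lemma smap_smul {X Y : C} (c : k) (f : X ⟶ Y) :
    smap sd (c • f) = c • smap sd f := by
  rw [smap, smap, ← map_smul]
  congr 1
  apply LinearMap.ext; intro w
  simp only [dualf_apply, LinearMap.smul_apply, Linear.smul_comp, map_smul, smul_eq_mul]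

/-- The Serre functor. -/
noncomputable def SFun : C ⥤ C where
  obj X := (sd X).obj
  map f := smap sd f
  map_id X := smap_id sd X
  map_comp f g := smap_comp sd f g

instance SFun_additive : (SFun sd).Additive where
  map_add := smap_add sd _ _

instance SFun_linear : (SFun sd).Linear k where
  map_smul f c := smap_smul sd c f

/-- The Serre duality equivalences. -/
noncomputable def seta (A B : C) : (A ⟶ B) ≃ₗ[k] Module.Dual k (B ⟶ (sd A).obj) :=
  (Module.evalEquiv k (A ⟶ B)).trans ((sd A).ε B).dualMap

lemma seta_apply {A B : C} (u : A ⟶ B) (w : B ⟶ (sd A).obj) :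
    seta sd A B u w = (sd A).ε B w u := by
  simp only [seta, LinearEquiv.trans_apply, LinearEquiv.dualMap_apply,
    Module.evalEquiv_apply, Module.Dual.eval_apply]

lemma dualf_eq_seta {X Y : C} (f : X ⟶ Y) : dualf sd f = seta sd X Y f := by
  apply LinearMap.ext; intro w
  rw [seta_apply, dualf_apply]
  have h := (sd X).nat w (𝟙 ((sd X).obj)) f
  rw [Category.comp_id] at h
  rw [h]

lemma smap_bijective (X Y : C) :
    Function.Bijective (fun f : X ⟶ Y => smap sd f) := by
  have h : (fun f : X ⟶ Y => smap sd f)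
      = (fun f : X ⟶ Y => ((sd Y).ε ((sd X).obj)).symm (seta sd X Y f)) := by
    funext f
    rw [smap, dualf_eq_seta]
  rw [h]
  exact Function.Bijective.comp ((sd Y).ε ((sd X).obj)).symm.bijective
    (seta sd X Y).bijective

/-- The right Serre functor structure. -/
noncomputable def rightSerre : RightSerre k C where
  F := SFun sd
  additive := SFun_additive sd
  linear := SFun_linear sd
  η := seta sd
  nat_right := by
    intro A B B' g u w
    have key : ∀ w' : B' ⟶ (sd A).obj,
        seta sd A B' (u ≫ g) w' = seta sd A B u (g ≫ w') := by
      intro w'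
      rw [seta_apply, seta_apply]
      exact ((sd A).nat g w' u).symm
    exact key w
  nat_left := by
    intro A A' B f u w
    have key : ∀ w' : B ⟶ (sd A').obj,
        seta sd A' B (f ≫ u) w' = seta sd A B u (w' ≫ smap sd f) := by
      intro w'
      rw [seta_apply, seta_apply]
      exact (smap_star sd f w' u).symm
    exact key w

end SerreFunctor

section AR

variable [∀ X Y : C, FiniteDimensional k (X ⟶ Y)]

/-- View an endomorphism as an element of the endomorphism ring. -/
def toEnd {Z : C} (g : Z ⟶ Z) : End Z := g

/-- View an element of the endomorphism ring as a morphism. -/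
def ofEnd {Z : C} (g : End Z) : Z ⟶ Z := g

lemma isUnit_add_one_of_local {R : Type*} [Ring R] [IsLocalRing R] {a b : R}
    (ha : ¬IsUnit a) (hb : ¬IsUnit b) : ¬IsUnit (a + b) := by
  intro h
  obtain ⟨u, hu⟩ := h
  have h1 : ((↑u⁻¹ : R) * a) + ((↑u⁻¹ : R) * b) = 1 := by
    rw [← mul_add, ← hu, Units.inv_mul]
  rcases IsLocalRing.isUnit_or_isUnit_of_add_one h1 with h2 | h2
  · apply ha
    have key : (↑u : R) * ((↑u⁻¹ : R) * a) = a := by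
      rw [← mul_assoc, Units.mul_inv, one_mul]
    exact key ▸ u.isUnit.mul h2
  · apply hb
    have key : (↑u : R) * ((↑u⁻¹ : R) * b) = b := by
      rw [← mul_assoc, Units.mul_inv, one_mul]
    exact key ▸ u.isUnit.mul h2

variable (k) in
lemma exists_dual_annihilating {V : Type v} [AddCommGroup V] [Module k V]
    [FiniteDimensional k V] (N : Submodule k V) (hN : N ≠ ⊤) :
    ∃ φ : Module.Dual k V, φ ≠ 0 ∧ ∀ x ∈ N, φ x = 0 := by
  obtain ⟨v, hv⟩ : ∃ v : V, v ∉ N := by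
    by_contra h
    push_neg at h
    exact hN (Submodule.eq_top_iff'.mpr h)
  have hq : N.mkQ v ≠ 0 := by
    intro h
    exact hv ((Submodule.Quotient.mk_eq_zero N).mp h)
  obtain ⟨ψ, hψ⟩ : ∃ ψ : Module.Dual k (V ⧸ N), ψ (N.mkQ v) ≠ 0 := by
    by_contra h
    push_neg at h
    exact hq ((Module.forall_dual_apply_eq_zero_iff k (N.mkQ v)).mp h)
  refine ⟨ψ.comp N.mkQ, ?_, ?_⟩
  · intro h0
    apply hψ
    have := congrArg (fun φ => φ v) h0
    simpa using this
  · intro x hx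
    simp only [LinearMap.comp_apply, Submodule.mkQ_apply]
    rw [(Submodule.Quotient.mk_eq_zero N).mpr hx, map_zero]

/-- The non-invertible endomorphisms of an object with local endomorphism
ring form a submodule. -/
noncomputable def nonunitsSubmodule {Z : C} (hl : IsLocalRing (End Z)) :
    Submodule k (Z ⟶ Z) where
  carrier := {g | ¬IsUnit (toEnd g)}
  zero_mem' := by
    intro h
    have h0 : IsUnit (0 : End Z) := h
    rw [isUnit_zero_iff] at h0
    exact zero_ne_one h0
  add_mem' := by
    intro a b ha hb
    exact isUnit_add_one_of_local ha hb
  smul_mem' := by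
    intro c g hg hu
    apply hg
    by_cases hc : c = 0
    · exfalso
      rw [hc, zero_smul] at hu
      have h0 : IsUnit (0 : End Z) := hu
      rw [isUnit_zero_iff] at h0
      exact zero_ne_one h0
    · have hu' : IsUnit ((c : k) • (toEnd g)) := hu
      rw [Algebra.smul_def] at hu'
      have hc' : IsUnit (algebraMap k (End Z) c) :=
        (isUnit_iff_ne_zero.mpr hc).map (algebraMap k (End Z))
      obtain ⟨uu, huu⟩ := hc'
      rw [← huu] at hu'
      have h1 : ((uu⁻¹ : (End Z)ˣ) : End Z) * ((uu : End Z) * toEnd g) = toEnd g :=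
        Units.inv_mul_cancel_left _ _
      have h2 := (uu⁻¹).isUnit.mul hu'
      rwa [h1] at h2

lemma nonunitsSubmodule_ne_top {Z : C} (hl : IsLocalRing (End Z)) :
    (nonunitsSubmodule (k := k) hl) ≠ ⊤ := by
  intro h
  have h1 : (𝟙 Z) ∈ (nonunitsSubmodule (k := k) hl) := by rw [h]; trivial
  exact h1 (isUnit_one (M := End Z))

lemma retraction_of_isUnit {Z V : C} (t : V ⟶ Z) (g : Z ⟶ V)
    (h : IsUnit (toEnd (g ≫ t))) : ∃ s : Z ⟶ V, s ≫ t = 𝟙 Z := by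
  refine ⟨ofEnd ↑h.unit⁻¹ ≫ g, ?_⟩
  have h1 : (h.unit : End Z) * ↑h.unit⁻¹ = 1 := h.unit.mul_inv
  rw [h.unit_spec, End.mul_def] at h1
  rw [Category.assoc]
  exact h1

/-- Existence of Auslander-Reiten triangles ending at an object with local
endomorphism ring admitting a Serre dual. -/
lemma exists_ar_triangle {Z : C} (hl : IsLocalRing (End Z)) (D : SDualData k Z) :
    ∃ (E : C) (u : D.obj⟦(-1:ℤ)⟧ ⟶ E) (v : E ⟶ Z) (w : Z ⟶ (D.obj⟦(-1:ℤ)⟧)⟦(1:ℤ)⟧),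
      (Triangle.mk u v w ∈ distTriang C) ∧ w ≠ 0 ∧
      ∀ ⦃V : C⦄ (t : V ⟶ Z), (¬∃ s : Z ⟶ V, s ≫ t = 𝟙 Z) → ∃ t', t = t' ≫ v := by
  obtain ⟨φ, hφ, hφkill⟩ := exists_dual_annihilating k (nonunitsSubmodule (k := k) hl)
    (nonunitsSubmodule_ne_top hl)
  set w₀ : Z ⟶ D.obj := (D.ε Z).symm φ with hw₀
  have hw₀ne : w₀ ≠ 0 := by
    intro h
    apply hφ
    have h2 := congrArg (D.ε Z) h
    rw [hw₀, LinearEquiv.apply_symm_apply, map_zero] at h2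
    exact h2
  have hkill : ∀ ⦃V : C⦄ (t : V ⟶ Z), (¬∃ s : Z ⟶ V, s ≫ t = 𝟙 Z) → t ≫ w₀ = 0 := by
    intro V t ht
    have h3 : D.ε V (t ≫ w₀) = 0 := by
      apply LinearMap.ext; intro g
      rw [D.nat t w₀ g, hw₀, LinearEquiv.apply_symm_apply]
      have hnu : ¬IsUnit (toEnd (g ≫ t)) := fun hu => ht (retraction_of_isUnit t g hu)
      exact hφkill _ hnu
    have h4 := congrArg (D.ε V).symm h3
    rw [LinearEquiv.symm_apply_apply, map_zero] at h4
    exact h4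
  obtain ⟨Cw, g, h, hT⟩ := Pretriangulated.distinguished_cocone_triangle w₀
  have hT2 : (Triangle.mk w₀ g h).invRotate.invRotate ∈ distTriang C :=
    inv_rot_of_distTriang _ (inv_rot_of_distTriang _ hT)
  set T₂ := (Triangle.mk w₀ g h).invRotate.invRotate with hT₂def
  have hmor3 : T₂.mor₃ = w₀ ≫ (shiftEquiv C (1 : ℤ)).counitIso.inv.app D.obj := rfl
  refine ⟨T₂.obj₂, T₂.mor₁, T₂.mor₂, T₂.mor₃, hT2, ?_, ?_⟩
  · rw [hmor3]
    intro hzero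
    apply hw₀ne
    have h5 : (w₀ ≫ (shiftEquiv C (1 : ℤ)).counitIso.inv.app D.obj)
        ≫ (shiftEquiv C (1 : ℤ)).counitIso.hom.app D.obj
        = w₀ := by rw [Category.assoc, Iso.inv_hom_id_app]; exact Category.comp_id _
    rw [hzero] at h5
    exact h5.symm.trans zero_comp
  · intro V t ht
    have h3 : t ≫ T₂.mor₃ = 0 := by
      rw [hmor3]; exact (Category.assoc _ _ _).symm.trans ((congrArg (· ≫ _) (hkill t ht)).trans zero_comp)
    exact Triangle.coyoneda_exact₃ T₂ hT2 t h3

/-- Uniqueness of the first object of an Auslander-Reiten triangle. -/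
lemma ar_unique {X E Z X' E' : C} (u : X ⟶ E) (v : E ⟶ Z) (w : Z ⟶ X⟦(1:ℤ)⟧)
    (u' : X' ⟶ E') (v' : E' ⟶ Z) (w' : Z ⟶ X'⟦(1:ℤ)⟧)
    (hT : Triangle.mk u v w ∈ distTriang C) (hT' : Triangle.mk u' v' w' ∈ distTriang C)
    (hw : w ≠ 0) (hw' : w' ≠ 0)
    (hX : IsLocalRing (End X)) (hX' : IsLocalRing (End X'))
    (fac : ∀ ⦃V : C⦄ (t : V ⟶ Z), (¬∃ s : Z ⟶ V, s ≫ t = 𝟙 Z) → ∃ t', t = t' ≫ v)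
    (fac' : ∀ ⦃V : C⦄ (t : V ⟶ Z), (¬∃ s : Z ⟶ V, s ≫ t = 𝟙 Z) → ∃ t', t = t' ≫ v') :
    Nonempty (X ≅ X') := by
  have hv : ¬∃ s : Z ⟶ E, s ≫ v = 𝟙 Z := by
    rintro ⟨s, hs⟩
    apply hw
    have h23 : v ≫ w = 0 := comp_distTriang_mor_zero₂₃ _ hT
    calc w = (s ≫ v) ≫ w := by rw [hs, Category.id_comp]
      _ = s ≫ (v ≫ w) := Category.assoc _ _ _
      _ = 0 := by rw [h23, comp_zero]
  have hv' : ¬∃ s : Z ⟶ E', s ≫ v' = 𝟙 Z := by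
    rintro ⟨s, hs⟩
    apply hw'
    have h23 : v' ≫ w' = 0 := comp_distTriang_mor_zero₂₃ _ hT'
    calc w' = (s ≫ v') ≫ w' := by rw [hs, Category.id_comp]
      _ = s ≫ (v' ≫ w') := Category.assoc _ _ _
      _ = 0 := by rw [h23, comp_zero]
  obtain ⟨c, hc⟩ := fac' v hv
  obtain ⟨c', hc'⟩ := fac v' hv'
  obtain ⟨c₃, hc₂, -⟩ := complete_distinguished_triangle_morphism
    (Triangle.mk u v w).rotate (Triangle.mk u' v' w').rotate
    (rot_of_distTriang _ hT) (rot_of_distTriang _ hT') c (𝟙 Z)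
    (by show v ≫ 𝟙 Z = c ≫ v'; rw [Category.comp_id, ← hc])
  obtain ⟨b₃, hb₂, -⟩ := complete_distinguished_triangle_morphism
    (Triangle.mk u' v' w').rotate (Triangle.mk u v w).rotate
    (rot_of_distTriang _ hT') (rot_of_distTriang _ hT) c' (𝟙 Z)
    (by show v' ≫ 𝟙 Z = c' ≫ v; rw [Category.comp_id, ← hc'])
  change w ≫ c₃ = 𝟙 Z ≫ w' at hc₂
  change w' ≫ b₃ = 𝟙 Z ≫ w at hb₂
  rw [Category.id_comp] at hc₂ hb₂
  have stepc : ∃ cc : X⟦(1:ℤ)⟧ ⟶ X'⟦(1:ℤ)⟧, w ≫ cc = w' := ⟨c₃, hc₂⟩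
  have stepb : ∃ bb : X'⟦(1:ℤ)⟧ ⟶ X⟦(1:ℤ)⟧, w' ≫ bb = w := ⟨b₃, hb₂⟩
  obtain ⟨c₄, hc₄⟩ := stepc
  obtain ⟨b₄, hb₄⟩ := stepb
  obtain ⟨a₀, ha₀⟩ := (shiftFunctor C (1:ℤ)).map_surjective c₄
  obtain ⟨b₀, hb₀⟩ := (shiftFunctor C (1:ℤ)).map_surjective b₄
  have hr : w ≫ (a₀ ≫ b₀)⟦(1:ℤ)⟧' = w := by
    rw [Functor.map_comp, ha₀, hb₀, ← Category.assoc, hc₄, hb₄]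
  have hr' : w' ≫ (b₀ ≫ a₀)⟦(1:ℤ)⟧' = w' := by
    rw [Functor.map_comp, hb₀, ha₀, ← Category.assoc, hb₄, hc₄]
  have key : ∀ {Y Y' : C} (a : Y ⟶ Y') (b : Y' ⟶ Y) (ww : Z ⟶ Y⟦(1:ℤ)⟧),
      IsLocalRing (End Y) → ww ≠ 0 → ww ≫ (a ≫ b)⟦(1:ℤ)⟧' = ww →
      IsUnit (toEnd (a ≫ b)) := by
    intro Y Y' a b ww hloc hwne hfix
    by_contra hnu
    have hone : IsUnit ((1 : End Y) - toEnd (a ≫ b)) := by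
      have hsum : ((1 : End Y) - toEnd (a ≫ b)) + toEnd (a ≫ b) = 1 := sub_add_cancel _ _
      rcases IsLocalRing.isUnit_or_isUnit_of_add_one hsum with h1 | h1
      · exact h1
      · exact absurd h1 hnu
    have hofend : ofEnd ((1 : End Y) - toEnd (a ≫ b)) = 𝟙 Y - (a ≫ b) := rfl
    have hzero : ww ≫ (ofEnd ((1 : End Y) - toEnd (a ≫ b)))⟦(1:ℤ)⟧' = 0 := by
      rw [hofend, Functor.map_sub, Preadditive.comp_sub, CategoryTheory.Functor.map_id,
        Category.comp_id, hfix, sub_self]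
    have hcomp : ofEnd ((1 : End Y) - toEnd (a ≫ b)) ≫ ofEnd ↑hone.unit⁻¹ = 𝟙 Y := by
      have h1 : (↑hone.unit⁻¹ : End Y) * (hone.unit : End Y) = 1 := hone.unit.inv_mul
      rw [hone.unit_spec, End.mul_def] at h1
      exact h1
    apply hwne
    calc ww = ww ≫ 𝟙 _ := (Category.comp_id _).symm
      _ = ww ≫ (ofEnd ((1 : End Y) - toEnd (a ≫ b))
            ≫ ofEnd ↑hone.unit⁻¹)⟦(1:ℤ)⟧' := by
          rw [hcomp, CategoryTheory.Functor.map_id]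
      _ = (ww ≫ (ofEnd ((1 : End Y) - toEnd (a ≫ b)))⟦(1:ℤ)⟧')
            ≫ (ofEnd ↑hone.unit⁻¹)⟦(1:ℤ)⟧' := by
          rw [Functor.map_comp, Category.assoc]
      _ = 0 := by rw [hzero, zero_comp]
  have hu1 : IsUnit (toEnd (a₀ ≫ b₀)) := key a₀ b₀ w hX hw hr
  have hu2 : IsUnit (toEnd (b₀ ≫ a₀)) := key b₀ a₀ w' hX' hw' hr'
  set m : X ⟶ X := ofEnd ↑hu1.unit⁻¹ with hm
  set m' : X' ⟶ X' := ofEnd ↑hu2.unit⁻¹ with hm'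
  have hm1 : (a₀ ≫ b₀) ≫ m = 𝟙 X := by
    have h1 : (↑hu1.unit⁻¹ : End X) * (hu1.unit : End X) = 1 := hu1.unit.inv_mul
    rw [hu1.unit_spec, End.mul_def] at h1
    exact h1
  have hm2 : m' ≫ (b₀ ≫ a₀) = 𝟙 X' := by
    have h1 : (hu2.unit : End X') * (↑hu2.unit⁻¹ : End X') = 1 := hu2.unit.mul_inv
    rw [hu2.unit_spec, End.mul_def] at h1
    exact h1
  have hswap : m' ≫ b₀ = b₀ ≫ m := by
    calc m' ≫ b₀ = (m' ≫ b₀) ≫ 𝟙 X := (Category.comp_id _).symm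
      _ = (m' ≫ b₀) ≫ ((a₀ ≫ b₀) ≫ m) := by rw [hm1]
      _ = (m' ≫ (b₀ ≫ a₀)) ≫ (b₀ ≫ m) := by simp only [Category.assoc]
      _ = 𝟙 X' ≫ (b₀ ≫ m) := by rw [hm2]
      _ = b₀ ≫ m := Category.id_comp _
  refine ⟨⟨a₀, b₀ ≫ m, ?_, ?_⟩⟩
  · rw [← Category.assoc]
    exact hm1
  · rw [← hswap, Category.assoc, hm2]

end AR

section EssSurj

variable [∀ X Y : C, FiniteDimensional k (X ⟶ Y)]

lemma indec_of_iso {A B : C} (h : Indec A) (e : A ≅ B) : Indec B := by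
  refine ⟨fun hz => h.1 (hz.of_iso e), fun P Q hPQ => ?_⟩
  exact h.2 P Q (isDecomp_of_iso hPQ e.symm (Iso.refl _) (Iso.refl _))

lemma shift_map_ne_zero {X Y : C} {f : X ⟶ Y} (n : ℤ) (h : f ≠ 0) :
    f⟦n⟧' ≠ 0 := by
  intro h0
  apply h
  apply (shiftFunctor C n).map_injective
  rw [h0, Functor.map_zero]

lemma comp_isIso_ne_zero {X Y Z : C} {f : X ⟶ Y} (g : Y ⟶ Z) [IsIso g] (h : f ≠ 0) :
    f ≫ g ≠ 0 := by
  intro h0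
  apply h
  have h1 : (f ≫ g) ≫ inv g = f := by simp
  rw [← h1, h0, zero_comp]

lemma unit_smul_ne_zero {X Y : C} (u : ℤˣ) {f : X ⟶ Y} (h : f ≠ 0) : u • f ≠ 0 := by
  intro h0
  apply h
  have h1 : u⁻¹ • (u • f) = f := inv_smul_smul u f
  rw [← h1, h0, smul_zero]

/-- Every indecomposable object is, up to isomorphism, a Serre dual. -/
lemma indec_mem_essim (hKS : KrullSchmidt C)
    (hCY : ∀ X : C, Indec X → ∃ d : ℤ, IsCYObj k C d X)
    (sd : ∀ X : C, SDualData k X) {Y : C} (hY : Indec Y) :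
    ∃ W : C, Nonempty ((sd W).obj ≅ Y) := by
  obtain ⟨e, cy⟩ := hCY Y hY
  set W : C := Y⟦(-e : ℤ)⟧ with hWdef
  have hW : Indec W := indec_shift hY (-e)
  obtain ⟨E₁, u₁, v₁, w₁, hT₁, hw₁, fac₁⟩ := exists_ar_triangle (hKS W hW) (sd W)
  set D : SDualData k Y := SDualData.ofCY cy with hDdef
  obtain ⟨E₂, u₂, v₂, w₂, hT₂, hw₂, fac₂⟩ := exists_ar_triangle (hKS Y hY) D
  set ε : ℤˣ := (-e : ℤ).negOnePow with hε
  have hT₂' : Triangle.mk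
      (ε • u₂⟦(-e : ℤ)⟧') (ε • v₂⟦(-e : ℤ)⟧')
      (ε • (w₂⟦(-e : ℤ)⟧' ≫ (shiftFunctorComm C 1 (-e)).hom.app (D.obj⟦(-1 : ℤ)⟧)))
      ∈ distTriang C :=
    Pretriangulated.Triangle.shift_distinguished (Triangle.mk u₂ v₂ w₂) hT₂ (-e)
  have hw₂' : (ε • (w₂⟦(-e : ℤ)⟧'
      ≫ (shiftFunctorComm C 1 (-e)).hom.app (D.obj⟦(-1 : ℤ)⟧))) ≠ 0 :=
    unit_smul_ne_zero ε (comp_isIso_ne_zero _ (shift_map_ne_zero (-e) hw₂))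
  have fac₂' : ∀ ⦃V : C⦄ (t : V ⟶ W), (¬∃ s : W ⟶ V, s ≫ t = 𝟙 W) →
      ∃ t', t = t' ≫ (ε • v₂⟦(-e : ℤ)⟧') := by
    intro V t ht
    set β : (V⟦(e : ℤ)⟧)⟦(-e : ℤ)⟧ ≅ V :=
      (shiftFunctorCompIsoId C e (-e) (add_neg_cancel e)).app V with hβ
    obtain ⟨t₁, ht₁⟩ := (shiftFunctor C (-e : ℤ)).map_surjective (β.hom ≫ t)
    have ht₁nr : ¬∃ s : Y ⟶ V⟦(e : ℤ)⟧, s ≫ t₁ = 𝟙 Y := by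
      rintro ⟨s, hs⟩
      apply ht
      refine ⟨s⟦(-e : ℤ)⟧' ≫ β.hom, ?_⟩
      have h1 : s⟦(-e : ℤ)⟧' ≫ t₁⟦(-e : ℤ)⟧' = 𝟙 W := by
        rw [← Functor.map_comp, hs, CategoryTheory.Functor.map_id]
      rw [ht₁] at h1
      rw [Category.assoc]
      exact h1
    obtain ⟨t₂, ht₂⟩ := fac₂ t₁ ht₁nr
    refine ⟨ε⁻¹ • (β.inv ≫ t₂⟦(-e : ℤ)⟧'), ?_⟩
    have hcalc : (ε⁻¹ • (β.inv ≫ t₂⟦(-e : ℤ)⟧')) ≫ (ε • v₂⟦(-e : ℤ)⟧')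
        = t := by
      calc (ε⁻¹ • (β.inv ≫ t₂⟦(-e : ℤ)⟧')) ≫ (ε • v₂⟦(-e : ℤ)⟧')
          = ε⁻¹ • ((β.inv ≫ t₂⟦(-e : ℤ)⟧') ≫ (ε • v₂⟦(-e : ℤ)⟧')) :=
            Linear.units_smul_comp _ _ _
        _ = ε⁻¹ • (ε • ((β.inv ≫ t₂⟦(-e : ℤ)⟧') ≫ v₂⟦(-e : ℤ)⟧')) := by
            rw [Linear.comp_units_smul]
        _ = (β.inv ≫ t₂⟦(-e : ℤ)⟧') ≫ v₂⟦(-e : ℤ)⟧' := inv_smul_smul ε _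
        _ = β.inv ≫ (t₂ ≫ v₂)⟦(-e : ℤ)⟧' := by
            rw [Category.assoc, ← Functor.map_comp]
        _ = β.inv ≫ t₁⟦(-e : ℤ)⟧' := by rw [← ht₂]
        _ = β.inv ≫ (β.hom ≫ t) := by rw [ht₁]
        _ = t := by rw [← Category.assoc, Iso.inv_hom_id, Category.id_comp]
    exact hcalc.symm
  have loc₁ : IsLocalRing (End ((sd W).obj⟦(-1 : ℤ)⟧)) := by
    obtain ⟨f, cyW⟩ := hCY W hW
    obtain ⟨eW⟩ := sdual_unique (sd W) (SDualData.ofCY cyW)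
    have hobj : Indec ((sd W).obj) := indec_of_iso (indec_shift hW f) eW.symm
    exact hKS _ (indec_shift hobj (-1))
  have loc₂ : IsLocalRing (End ((D.obj⟦(-1 : ℤ)⟧)⟦(-e : ℤ)⟧)) :=
    hKS _ (indec_shift (indec_shift (indec_shift hY e) (-1)) (-e))
  obtain ⟨J⟩ := ar_unique u₁ v₁ w₁
    (ε • u₂⟦(-e : ℤ)⟧') (ε • v₂⟦(-e : ℤ)⟧')
    (ε • (w₂⟦(-e : ℤ)⟧' ≫ (shiftFunctorComm C 1 (-e)).hom.app (D.obj⟦(-1 : ℤ)⟧)))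
    hT₁ hT₂' hw₁ hw₂' loc₁ loc₂ fac₁ fac₂'
  -- J : (sd W).obj⟦-1⟧ ≅ (D.obj⟦-1⟧)⟦-e⟧ ; now untangle the shifts
  have i₀ : (D.obj⟦(-1 : ℤ)⟧ : C) ≅ (Y⟦(-1 : ℤ)⟧)⟦(e : ℤ)⟧ :=
    (shiftFunctorComm C e (-1)).app Y
  have i₁ : ((D.obj⟦(-1 : ℤ)⟧)⟦(-e : ℤ)⟧ : C) ≅ Y⟦(-1 : ℤ)⟧ :=
    (shiftFunctor C (-e : ℤ)).mapIso i₀ ≪≫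
      (shiftFunctorCompIsoId C e (-e) (add_neg_cancel e)).app (Y⟦(-1 : ℤ)⟧)
  have i₂ : (((D.obj⟦(-1 : ℤ)⟧)⟦(-e : ℤ)⟧)⟦(1 : ℤ)⟧ : C) ≅ Y :=
    (shiftFunctor C (1 : ℤ)).mapIso i₁ ≪≫
      (shiftFunctorCompIsoId C (-1) 1 (neg_add_cancel 1)).app Y
  refine ⟨W, ⟨?_⟩⟩
  exact ((shiftFunctorCompIsoId C (-1 : ℤ) (1 : ℤ) (neg_add_cancel 1)).app
      ((sd W).obj)).symm ≪≫ (shiftFunctor C (1 : ℤ)).mapIso J ≪≫ i₂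

end EssSurj


end CYProof


/-- **Statement 6** (Remark 3.6). Let `𝒜` be a Hom-finite Krull-Schmidt triangulated
`k`-category. If every indecomposable object `X` is a `d_X`-th Calabi-Yau object for
some integer `d_X`, then `𝒜` has a Serre functor `F` with `F(X) ≅ X⟦d_X⟧` for each
indecomposable `X`. -/
theorem stmt_6 (k : Type u) [Field k] (C : Type u) [Category.{v} C] [Preadditive C]
    [Linear k C] [HasZeroObject C] [HasShift C ℤ]
    [∀ n : ℤ, (shiftFunctor C n).Additive] [Pretriangulated C]
    [∀ X Y : C, FiniteDimensional k (X ⟶ Y)]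
    (hKS : KrullSchmidt C)
    (hCY : ∀ X : C, Indec X → ∃ d : ℤ, IsCYObj k C d X) :
    ∃ S : Serre k C, ∀ (X : C) (d : ℤ), Indec X → IsCYObj k C d X →
      Nonempty (S.F.obj X ≅ X⟦d⟧) := by
  classical
  have sdex : ∀ X : C, Nonempty (CYProof.SDualData k X) := CYProof.exists_sdual hCY
  set sd : ∀ X : C, CYProof.SDualData k X := fun X => Classical.choice (sdex X) with hsd
  have hfaith : (CYProof.SFun sd).Faithful :=
    { map_injective := fun {X Y} => (CYProof.smap_bijective sd X Y).1 }
  have hfull : (CYProof.SFun sd).Full :=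
    { map_surjective := fun {X Y} => (CYProof.smap_bijective sd X Y).2 }
  have hess : (CYProof.SFun sd).EssSurj := by
    constructor
    apply CYProof.decomp_induction (k := k)
    · intro X h0
      obtain ⟨e⟩ := CYProof.sdual_unique (sd X) (CYProof.SDualData.ofZero h0)
      exact ⟨X, ⟨e⟩⟩
    · intro X hi
      obtain ⟨W, ⟨e⟩⟩ := CYProof.indec_mem_essim hKS hCY sd hi
      exact ⟨W, ⟨e⟩⟩
    · intro X A B hd hA hB hWA hWB
      obtain ⟨WA, ⟨eA⟩⟩ := hWA
      obtain ⟨WB, ⟨eB⟩⟩ := hWB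
      obtain ⟨P, hP⟩ := CYProof.exists_decomp WA WB
      have hFP : IsDecomp ((CYProof.SFun sd).obj P) ((CYProof.SFun sd).obj WA)
          ((CYProof.SFun sd).obj WB) := CYProof.isDecomp_map hP (CYProof.SFun sd)
      obtain ⟨e⟩ := CYProof.isDecomp_unique_up_to_iso hFP hd eA eB
      exact ⟨P, ⟨e⟩⟩
  have hequiv : (CYProof.SFun sd).IsEquivalence :=
    { faithful := hfaith, full := hfull, essSurj := hess }
  refine ⟨⟨CYProof.rightSerre sd, hequiv⟩, ?_⟩
  intro X d hX hcy
  exact CYProof.sdual_unique (sd X) (CYProof.SDualData.ofCY hcy)
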